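/- Fix an integer l ≥ 2, let ζ = e^{2πi/l}, ω = e^{πi/l}, let P ∈ M_l(ℂ) be the cyclic permutation matrix (P_{i,i+1} = 1 for 1 ≤ i ≤ l−1, P_{l,1} = 1, other entries 0) and Q = diag(ζ, ζ², …, ζ^l), and for r, m ∈ ℤ set a_{r,m} = ω^{rm}·Q^r·P^m and d_{r,m} = a_{r,m} − ζ^r·a_{−r,m}. Let T ∈ M_l(ℂ) be the matrix with T_{i, l+1−i} = 1 for 1 ≤ i ≤ l and all other entries 0. Then span_ℂ{ d_{r,m} : r, m ∈ ℤ } = { X ∈ M_l(ℂ) : Xᵀ·T = −T·X }; this set is a Lie subalgebra of gl_l(ℂ) of dimension l(l−1)/2, and it is isomorphic as a complex Lie algebra to the orthogonal Lie algebra so(l,ℂ) = { X ∈ M_l(ℂ) : Xᵀ = −X } (the simple Lie algebra of type B_{(l−1)/2} if l is odd, and of type D_{l/2} if l is even). -/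

import Mathlib

open Complex Matrix

/-- The `l×l` complex matrix algebra, with rows and columns indexed cyclically. -/
abbrev MatL (l : ℕ) := Matrix (ZMod l) (ZMod l) ℂ

/-- `ζ = e^{2πi/l}`. -/
noncomputable def zetaL (l : ℕ) : ℂ := Complex.exp (2 * Real.pi * Complex.I / l)

/-- The cyclic permutation matrix `P` (with `P_{i,i+1} = 1` cyclically). -/
noncomputable def Pmat (l : ℕ) : MatL l :=
  Matrix.of fun i j => if j = i + 1 then (1 : ℂ) else 0

/-- The diagonal matrix `Q = diag(ζ, ζ², …, ζ^l)`. -/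
noncomputable def Qmat (l : ℕ) : MatL l :=
  Matrix.of fun i j => if i = j then zetaL l ^ (i.val + 1) else 0

/-- `ω = e^{πi/l}`. -/
noncomputable def omegaL (l : ℕ) : ℂ := Complex.exp (Real.pi * Complex.I / l)

/-- The matrices `a_{r,m} = ω^{rm} · Q^r · P^m` for `r, m ∈ ℤ`. -/
noncomputable def amat (l : ℕ) [NeZero l] (r m : ℤ) : MatL l :=
  omegaL l ^ (r * m) • (Qmat l ^ r * Pmat l ^ m)


/-- `d_{r,m} = a_{r,m} − ζ^r a_{−r,m}`. -/
noncomputable def dmat (l : ℕ) [NeZero l] (r m : ℤ) : MatL l :=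
  amat l r m - (zetaL l ^ r) • amat l (-r) m

/-- For a fixed matrix `T`, the linear map `X ↦ Xᵀ·T + T·X`, whose kernel is the space of
matrices with `Xᵀ·T = −T·X`. -/
noncomputable def skewPair {n : Type*} [Fintype n] (T : Matrix n n ℂ) :
    Matrix n n ℂ →ₗ[ℂ] Matrix n n ℂ where
  toFun X := Xᵀ * T + T * X
  map_add' X Y := by
    simp only [Matrix.transpose_add, Matrix.add_mul, Matrix.mul_add]
    abel
  map_smul' c X := by
    simp [Matrix.transpose_smul, Matrix.smul_mul, Matrix.mul_smul]

/-- The linear map `X ↦ Xᵀ + X`, whose kernel is `so(l,ℂ) = {X : Xᵀ = −X}`. -/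
noncomputable def transAdd {n : Type*} : Matrix n n ℂ →ₗ[ℂ] Matrix n n ℂ where
  toFun X := Xᵀ + X
  map_add' X Y := by
    simp only [Matrix.transpose_add]
    abel
  map_smul' c X := by
    simp [Matrix.transpose_smul]

/-- The antidiagonal matrix `T` with `T_{i,l+1−i} = 1` (1-indexed). -/
noncomputable def Tmat (l : ℕ) : MatL l :=
  Matrix.of fun i j => if i.val + j.val + 1 = l then (1 : ℂ) else 0

set_option linter.unusedSectionVars false
set_option maxHeartbeats 1000000
section Aux
variable (l : ℕ) [NeZero l]

variable (l : ℕ) [NeZero l]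

lemma lC_ne : (l : ℂ) ≠ 0 := Nat.cast_ne_zero.2 (NeZero.ne l)

lemma omega_ne : omegaL l ≠ 0 := Complex.exp_ne_zero _
lemma zeta_ne : zetaL l ≠ 0 := Complex.exp_ne_zero _

lemma omega_sq : omegaL l ^ 2 = zetaL l := by
  rw [omegaL, ← Complex.exp_nat_mul, zetaL]
  ring_nf

lemma omega_pow_l : omegaL l ^ l = -1 := by
  rw [omegaL, ← Complex.exp_nat_mul, ← Complex.exp_pi_mul_I]
  congr 1
  field_simp [lC_ne l]

lemma zeta_pow_l : zetaL l ^ l = 1 := by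
  rw [zetaL, ← Complex.exp_nat_mul, ← Complex.exp_two_pi_mul_I]
  congr 1
  field_simp [lC_ne l]

lemma zeta_zpow_eq_one_iff (k : ℤ) : zetaL l ^ k = 1 ↔ (k : ZMod l) = 0 := by
  rw [ZMod.intCast_zmod_eq_zero_iff_dvd]
  rw [zetaL, ← Complex.exp_int_mul, Complex.exp_eq_one_iff]
  constructor
  · rintro ⟨n, hn⟩
    refine ⟨n, ?_⟩
    rw [mul_comm]
    have h2 : (2 * (Real.pi:ℂ) * Complex.I) ≠ 0 := by
      simp [Real.pi_ne_zero, Complex.I_ne_zero]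
    field_simp [lC_ne l] at hn
    have : (k : ℂ) = n * l := by
      apply mul_right_cancel₀ h2
      linear_combination (2 * (Real.pi:ℂ) * Complex.I) * hn
    exact_mod_cast this
  · rintro ⟨n, rfl⟩
    exact ⟨n, by field_simp [lC_ne l]; norm_cast⟩

lemma zeta_zpow_congr {x y : ℤ} (h : (x : ZMod l) = (y : ZMod l)) :
    zetaL l ^ x = zetaL l ^ y := by
  have hd : (l:ℤ) ∣ x - y := by
    rwa [← ZMod.intCast_zmod_eq_zero_iff_dvd, Int.cast_sub, sub_eq_zero]
  obtain ⟨k, hk⟩ := hd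
  have hx : x = y + l * k := by omega
  rw [hx, zpow_add₀ (zeta_ne l), _root_.zpow_mul, zpow_natCast, zeta_pow_l, _root_.one_zpow, mul_one]

lemma omega_zpow_two_mul (x : ℤ) : omegaL l ^ (2 * x) = zetaL l ^ x := by
  rw [_root_.zpow_mul, ← omega_sq l, zpow_ofNat]

lemma omega_zpow_congr {x y : ℤ} (h : (2 * l : ℤ) ∣ x - y) :
    omegaL l ^ x = omegaL l ^ y := by
  obtain ⟨k, hk⟩ := h
  have hx : x = y + (2 * l) * k := by omega
  have h2l : omegaL l ^ ((2 * l : ℕ) : ℤ) = 1 := by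
    rw [zpow_natCast, pow_mul, omega_sq, zeta_pow_l]
  calc omegaL l ^ x = omegaL l ^ y * (omegaL l ^ ((2*l:ℕ):ℤ)) ^ k := by
        rw [← _root_.zpow_mul, ← zpow_add₀ (omega_ne l), hx]; norm_num
    _ = omegaL l ^ y := by rw [h2l, _root_.one_zpow, mul_one]

lemma char_sum (k : ℤ) :
    ∑ r ∈ Finset.range l, (zetaL l ^ k) ^ r
      = if (k : ZMod l) = 0 then (l : ℂ) else 0 := by
  by_cases h : (k : ZMod l) = 0
  · rw [if_pos h]
    have h1 : zetaL l ^ k = 1 := (zeta_zpow_eq_one_iff l k).2 h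
    simp [h1]
  · rw [if_neg h]
    have h1 : zetaL l ^ k ≠ 1 := fun hc => h ((zeta_zpow_eq_one_iff l k).1 hc)
    rw [geom_sum_eq h1]
    have : (zetaL l ^ k) ^ l = 1 := by
      rw [← zpow_natCast (zetaL l ^ k), ← _root_.zpow_mul, mul_comm, _root_.zpow_mul, zpow_natCast,
        zeta_pow_l, _root_.one_zpow]
    rw [this, sub_self, zero_div]


lemma Pmat_pow_apply (m : ℕ) (i j : ZMod l) :
    (Pmat l ^ m) i j = if j = i + m then 1 else 0 := by
  induction m generalizing i j with
  | zero => simp [Matrix.one_apply, eq_comm]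
  | succ n ih =>
    rw [pow_succ, Matrix.mul_apply]
    have hterm : ∀ k, (Pmat l ^ n) i k * Pmat l k j
        = if k = i + (n:ZMod l) then (if j = k + 1 then (1:ℂ) else 0) else 0 := by
      intro k
      rw [ih, Pmat]
      simp only [Matrix.of_apply, ite_mul, one_mul, zero_mul]
    simp only [hterm]
    rw [Finset.sum_ite_eq' Finset.univ (i + (n:ZMod l))]
    simp only [Finset.mem_univ, if_true]
    congr 2
    push_cast
    ring

lemma Qmat_pow_apply (r : ℕ) (i j : ZMod l) :
    (Qmat l ^ r) i j = if i = j then zetaL l ^ (r * (i.val + 1)) else 0 := by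
  induction r generalizing i j with
  | zero => simp [Matrix.one_apply]
  | succ n ih =>
    rw [pow_succ, Matrix.mul_apply]
    have hterm : ∀ k, (Qmat l ^ n) i k * Qmat l k j
        = if k = i then (if i = j then zetaL l ^ (n * (i.val + 1)) * zetaL l ^ (i.val + 1) else 0) else 0 := by
      intro k
      rw [ih, Qmat]
      simp only [Matrix.of_apply]
      by_cases hik : i = k
      · subst hik
        simp
      · rw [if_neg hik, zero_mul, if_neg (fun h => hik h.symm)]
    simp only [hterm]
    rw [Finset.sum_ite_eq' Finset.univ i]
    simp only [Finset.mem_univ, if_true, ← pow_add]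
    by_cases h : i = j
    · rw [if_pos h, if_pos h]
      congr 1
      ring
    · rw [if_neg h, if_neg h]

lemma Pmat_pow_l : Pmat l ^ l = 1 := by
  ext i j
  rw [Pmat_pow_apply, Matrix.one_apply]
  simp [ZMod.natCast_self, eq_comm]

lemma Qmat_pow_l : Qmat l ^ l = 1 := by
  ext i j
  rw [Qmat_pow_apply, Matrix.one_apply]
  by_cases h : i = j
  · rw [if_pos h, if_pos h, mul_comm, pow_mul, ← pow_mul, mul_comm (i.val+1) l, pow_mul,
      zeta_pow_l, one_pow]
  · rw [if_neg h, if_neg h]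

lemma pow_l_isUnit_det {A : MatL l} (hA : A ^ l = 1) : IsUnit A.det := by
  have : A.det ^ l = 1 := by rw [← Matrix.det_pow, hA, Matrix.det_one]
  exact IsUnit.of_mul_eq_one (A.det ^ (l - 1))
    (by rw [← pow_succ', Nat.sub_add_cancel (Nat.one_le_iff_ne_zero.2 (NeZero.ne l))]; exact this)

lemma mat_zpow_mod {A : MatL l} (hA : A ^ l = 1) (r : ℤ) :
    A ^ r = A ^ (r % l).toNat := by
  have hu := pow_l_isUnit_det l hA
  have h1 : r = (l : ℤ) * (r / l) + r % l := (Int.mul_ediv_add_emod r l).symm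
  have h2 : (0:ℤ) ≤ r % l := Int.emod_nonneg r (by exact_mod_cast NeZero.ne l)
  calc A ^ r = A ^ ((l : ℤ) * (r / l)) * A ^ (r % l) := by
        rw [← Matrix.zpow_add hu, ← h1]
    _ = (A ^ (l : ℤ)) ^ (r / l) * A ^ ((r % l).toNat : ℤ) := by
        rw [Matrix.zpow_mul A hu, Int.toNat_of_nonneg h2]
    _ = A ^ (r % l).toNat := by
        rw [zpow_natCast, zpow_natCast, hA, Matrix.one_zpow, one_mul]

lemma intCast_emod_zmod (m : ℤ) : ((m % l : ℤ) : ZMod l) = (m : ZMod l) := by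
  rw [ZMod.intCast_eq_intCast_iff]
  exact Int.emod_emod_of_dvd m dvd_rfl

lemma toNat_emod_cast (m : ℤ) : (((m % l).toNat : ℤ) : ZMod l) = (m : ZMod l) := by
  rw [Int.toNat_of_nonneg (Int.emod_nonneg m (by exact_mod_cast NeZero.ne l)),
    intCast_emod_zmod]

lemma amat_apply (r m : ℤ) (i j : ZMod l) :
    amat l r m i j
      = if j = i + (m : ZMod l) then omegaL l ^ (r * m) * zetaL l ^ (r * ((i.val : ℤ) + 1))
        else 0 := by
  rw [amat, mat_zpow_mod l (Qmat_pow_l l), mat_zpow_mod l (Pmat_pow_l l)]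
  set r' := (r % l).toNat with hr'
  set m' := (m % l).toNat with hm'
  rw [Matrix.smul_apply, Matrix.mul_apply]
  have hterm : ∀ k, (Qmat l ^ r') i k * (Pmat l ^ m') k j
      = if k = i then (if j = i + (m' : ZMod l) then zetaL l ^ (r' * (i.val + 1)) else 0)
        else 0 := by
    intro k
    rw [Qmat_pow_apply, Pmat_pow_apply]
    by_cases hik : i = k
    · subst hik
      simp
    · rw [if_neg hik, zero_mul, if_neg (fun h => hik h.symm)]
  rw [Finset.sum_congr rfl (fun k _ => hterm k), Finset.sum_ite_eq' Finset.univ i]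
  simp only [Finset.mem_univ, if_true]
  have hm'' : ((m' : ℕ) : ZMod l) = (m : ZMod l) := by
    rw [← toNat_emod_cast l m, Int.cast_natCast]
  rw [hm'']
  by_cases h : j = i + (m : ZMod l)
  · rw [if_pos h, if_pos h, smul_eq_mul]
    congr 1
    rw [← zpow_natCast (zetaL l)]
    apply zeta_zpow_congr
    push_cast
    rw [← Int.cast_natCast (R := ZMod l) r', toNat_emod_cast l r]
  · rw [if_neg h, if_neg h, smul_eq_mul, mul_zero]

lemma dmat_apply (r m : ℤ) (i j : ZMod l) :
    dmat l r m i j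
      = if j = i + (m : ZMod l) then
          omegaL l ^ (r * m) * zetaL l ^ (r * ((i.val : ℤ) + 1))
            - zetaL l ^ r * (omegaL l ^ (-(r * m)) * zetaL l ^ (-(r * ((i.val : ℤ) + 1))))
        else 0 := by
  rw [dmat, Matrix.sub_apply, Matrix.smul_apply, amat_apply, amat_apply, smul_eq_mul]
  by_cases h : j = i + (m : ZMod l)
  · rw [if_pos h, if_pos h, neg_mul, neg_mul, if_pos h]
  · simp only [if_neg h, mul_zero, sub_zero]


lemma val_add_eq_l_iff (i j : ZMod l) : i.val + j.val + 1 = l ↔ j = -(i + 1) := by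
  constructor
  · intro h
    have : ((i.val + j.val + 1 : ℕ) : ZMod l) = ((l : ℕ) : ZMod l) := by rw [h]
    rw [ZMod.natCast_self] at this
    push_cast at this
    rw [ZMod.natCast_val, ZMod.natCast_val, ZMod.cast_id, ZMod.cast_id] at this
    linear_combination this
  · rintro rfl
    have hi : i.val < l := ZMod.val_lt i
    have h1 : ((i.val + (-(i+1) : ZMod l).val + 1 : ℕ) : ZMod l) = 0 := by
      push_cast
      rw [ZMod.natCast_val, ZMod.natCast_val, ZMod.cast_id, ZMod.cast_id]
      ring
    have h2 := (ZMod.natCast_eq_zero_iff _ _).1 h1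
    have hj : (-(i+1) : ZMod l).val < l := ZMod.val_lt _
    obtain ⟨c, hc⟩ := h2
    -- i.val + v + 1 = l * c with bounds
    rcases Nat.lt_or_ge c 1 with h | h
    · interval_cases c <;> omega
    · rcases Nat.lt_or_ge c 2 with h' | h'
      · interval_cases c <;> omega
      · nlinarith [hi, hj]

lemma Tmat_apply (i j : ZMod l) : Tmat l i j = if j = -(i + 1) then 1 else 0 := by
  rw [Tmat, Matrix.of_apply]
  by_cases h : j = -(i+1)
  · rw [if_pos ((val_add_eq_l_iff l i j).2 h), if_pos h]
  · rw [if_neg (fun hc => h ((val_add_eq_l_iff l i j).1 hc)), if_neg h]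

lemma Tmat_apply' (i j : ZMod l) : Tmat l i j = if i = -(j + 1) then 1 else 0 := by
  rw [Tmat_apply]
  congr 1
  simp only [eq_iff_iff]
  constructor <;> intro h <;> [subst h; subst h] <;> ring

lemma mem_ker_skewPair_iff (X : MatL l) :
    X ∈ LinearMap.ker (skewPair (Tmat l)) ↔
      ∀ i j : ZMod l, X (-(j+1)) i + X (-(i+1)) j = 0 := by
  have happly : ∀ i j, (Xᵀ * Tmat l + Tmat l * X) i j = X (-(j+1)) i + X (-(i+1)) j := by
    intro i j
    rw [Matrix.add_apply, Matrix.mul_apply, Matrix.mul_apply]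
    congr 1
    · rw [Finset.sum_congr rfl (fun k _ => by
        rw [Matrix.transpose_apply, Tmat_apply', mul_ite, mul_one, mul_zero]),
        Finset.sum_ite_eq' Finset.univ (-(j+1) : ZMod l) (fun k => X k i)]
      simp
    · rw [Finset.sum_congr rfl (fun k _ => by
        rw [Tmat_apply, ite_mul, one_mul, zero_mul]),
        Finset.sum_ite_eq' Finset.univ (-(i+1) : ZMod l) (fun k => X k j)]
      simp
  rw [LinearMap.mem_ker]
  constructor
  · intro h i j
    rw [← happly]
    have : (skewPair (Tmat l)) X i j = 0 := by rw [h]; rfl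
    exact this
  · intro h
    ext i j
    rw [show (skewPair (Tmat l)) X i j = (Xᵀ * Tmat l + Tmat l * X) i j from rfl, happly]
    exact h i j

lemma key_scalar (r m : ℤ) (v w : ℕ)
    (h : ((v + w + 2 : ℤ) : ZMod l) = ((1 - m : ℤ) : ZMod l)) :
    omegaL l ^ (r * m) * zetaL l ^ (r * ((v:ℤ) + 1))
      = zetaL l ^ r * (omegaL l ^ (-(r * m)) * zetaL l ^ (-(r * ((w:ℤ) + 1)))) := by
  have hd : (l:ℤ) ∣ (v + w + 2) - (1 - m) := by
    rwa [← ZMod.intCast_zmod_eq_zero_iff_dvd, Int.cast_sub, sub_eq_zero]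
  rw [← omega_zpow_two_mul l (r * ((v:ℤ)+1)), ← omega_zpow_two_mul l r,
    ← omega_zpow_two_mul l (-(r * ((w:ℤ)+1))), ← zpow_add₀ (omega_ne l),
    ← zpow_add₀ (omega_ne l), ← zpow_add₀ (omega_ne l)]
  apply omega_zpow_congr
  obtain ⟨c, hc⟩ := hd
  refine ⟨r * c, ?_⟩
  linear_combination 2 * r * hc

lemma cond_symm (r m : ℤ) (i j : ZMod l) :
    (i = -(j+1) + (m : ZMod l)) ↔ (j = -(i+1) + (m : ZMod l)) := by
  constructor <;> intro h <;> [subst h; subst h] <;> ring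

lemma dmat_mem_ker (r m : ℤ) :
    dmat l r m ∈ LinearMap.ker (skewPair (Tmat l)) := by
  rw [mem_ker_skewPair_iff]
  intro i j
  rw [dmat_apply, dmat_apply]
  by_cases h : i = -(j+1) + (m : ZMod l)
  · rw [if_pos h, if_pos ((cond_symm l r m i j).1 h)]
    have hcong : ((((-(j+1) : ZMod l).val : ℤ) + ((-(i+1) : ZMod l).val : ℤ) + 2 : ℤ) : ZMod l)
        = ((1 - m : ℤ) : ZMod l) := by
      push_cast
      rw [ZMod.natCast_val, ZMod.natCast_val, ZMod.cast_id, ZMod.cast_id]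
      linear_combination -h
    have h1 := key_scalar l r m (-(j+1) : ZMod l).val (-(i+1) : ZMod l).val (by exact_mod_cast hcong)
    have hcong' : ((((-(i+1) : ZMod l).val : ℤ) + ((-(j+1) : ZMod l).val : ℤ) + 2 : ℤ) : ZMod l)
        = ((1 - m : ℤ) : ZMod l) := by rw [← hcong]; push_cast; ring
    have h2 := key_scalar l r m (-(i+1) : ZMod l).val (-(j+1) : ZMod l).val (by exact_mod_cast hcong')
    linear_combination h1 + h2
  · rw [if_neg h, if_neg (fun hc => h ((cond_symm l r m i j).2 hc)), add_zero]

noncomputable def Bm (l : ℕ) (a b : ZMod l) : MatL l :=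
  Matrix.of fun i j =>
    (if i = a ∧ j = b then (1:ℂ) else 0) - (if i = -(b+1) ∧ j = -(a+1) then 1 else 0)

lemma h1_scalar (r : ℕ) (m : ℤ) (av iv : ℕ) :
    zetaL l ^ (-(r:ℤ) * ((av:ℤ)+1)) * omegaL l ^ (-(r:ℤ) * m)
      * (omegaL l ^ ((r:ℤ) * m) * zetaL l ^ ((r:ℤ) * ((iv:ℤ)+1)))
    = (zetaL l ^ ((iv:ℤ) - (av:ℤ))) ^ r := by
  have hω := omega_ne l
  calc zetaL l ^ (-(r:ℤ) * ((av:ℤ)+1)) * omegaL l ^ (-(r:ℤ) * m)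
      * (omegaL l ^ ((r:ℤ) * m) * zetaL l ^ ((r:ℤ) * ((iv:ℤ)+1)))
      = omegaL l ^ (2 * (-(r:ℤ) * ((av:ℤ)+1))) * omegaL l ^ (-(r:ℤ) * m)
        * (omegaL l ^ ((r:ℤ) * m) * omegaL l ^ (2 * ((r:ℤ) * ((iv:ℤ)+1)))) := by
        rw [omega_zpow_two_mul, omega_zpow_two_mul]
    _ = omegaL l ^ (2 * (-(r:ℤ) * ((av:ℤ)+1)) + -(r:ℤ) * m + ((r:ℤ) * m + 2 * ((r:ℤ) * ((iv:ℤ)+1)))) := by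
        rw [← zpow_add₀ hω, ← zpow_add₀ hω, ← zpow_add₀ hω]
    _ = omegaL l ^ (2 * (((iv:ℤ) - (av:ℤ)) * r)) := by congr 1; ring
    _ = zetaL l ^ (((iv:ℤ) - (av:ℤ)) * r) := omega_zpow_two_mul l _
    _ = (zetaL l ^ ((iv:ℤ) - (av:ℤ))) ^ r := by rw [_root_.zpow_mul, zpow_natCast]

lemma h2_scalar (r : ℕ) (m : ℤ) (av iv : ℕ) :
    zetaL l ^ (-(r:ℤ) * ((av:ℤ)+1)) * omegaL l ^ (-(r:ℤ) * m)
      * (zetaL l ^ (r:ℤ) * (omegaL l ^ (-((r:ℤ) * m)) * zetaL l ^ (-((r:ℤ) * ((iv:ℤ)+1)))))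
    = (zetaL l ^ ((1 - m) - ((av:ℤ) + (iv:ℤ) + 2))) ^ r := by
  have hω := omega_ne l
  calc zetaL l ^ (-(r:ℤ) * ((av:ℤ)+1)) * omegaL l ^ (-(r:ℤ) * m)
      * (zetaL l ^ (r:ℤ) * (omegaL l ^ (-((r:ℤ) * m)) * zetaL l ^ (-((r:ℤ) * ((iv:ℤ)+1)))))
      = omegaL l ^ (2 * (-(r:ℤ) * ((av:ℤ)+1))) * omegaL l ^ (-(r:ℤ) * m)
        * (omegaL l ^ (2 * (r:ℤ)) * (omegaL l ^ (-((r:ℤ) * m)) * omegaL l ^ (2 * (-((r:ℤ) * ((iv:ℤ)+1)))))) := by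
        rw [omega_zpow_two_mul, omega_zpow_two_mul, omega_zpow_two_mul]
    _ = omegaL l ^ (2 * (-(r:ℤ) * ((av:ℤ)+1)) + -(r:ℤ) * m
          + (2 * (r:ℤ) + (-((r:ℤ) * m) + 2 * (-((r:ℤ) * ((iv:ℤ)+1)))))) := by
        rw [← zpow_add₀ hω, ← zpow_add₀ hω, ← zpow_add₀ hω, ← zpow_add₀ hω]
    _ = omegaL l ^ (2 * (((1 - m) - ((av:ℤ) + (iv:ℤ) + 2)) * r)) := by congr 1; ring
    _ = zetaL l ^ (((1 - m) - ((av:ℤ) + (iv:ℤ) + 2)) * r) := omega_zpow_two_mul l _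
    _ = (zetaL l ^ ((1 - m) - ((av:ℤ) + (iv:ℤ) + 2))) ^ r := by
        rw [_root_.zpow_mul, zpow_natCast]

lemma Bm_eq_sum (a b : ZMod l) :
    Bm l a b = ∑ r ∈ Finset.range l,
      ((l:ℂ)⁻¹ * zetaL l ^ (-(r:ℤ) * ((a.val:ℤ)+1)) * omegaL l ^ (-(r:ℤ) * (((b-a : ZMod l).val : ℤ))))
        • dmat l r (((b-a : ZMod l).val : ℤ)) := by
  set m : ℤ := (((b-a : ZMod l).val : ℤ)) with hm
  have hmz : ((m : ℤ) : ZMod l) = b - a := by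
    rw [hm, Int.cast_natCast, ZMod.natCast_val, ZMod.cast_id]
  ext i j
  rw [Matrix.sum_apply]
  have hterm : ∀ r : ℕ,
      (((l:ℂ)⁻¹ * zetaL l ^ (-(r:ℤ) * ((a.val:ℤ)+1)) * omegaL l ^ (-(r:ℤ) * m)) • dmat l r m) i j
      = if j = i + (b - a) then
          (l:ℂ)⁻¹ * (zetaL l ^ ((i.val:ℤ) - (a.val:ℤ))) ^ r
            - (l:ℂ)⁻¹ * (zetaL l ^ ((1 - m) - ((a.val:ℤ) + (i.val:ℤ) + 2))) ^ r
        else 0 := by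
    intro r
    rw [Matrix.smul_apply, dmat_apply, hmz, smul_eq_mul]
    by_cases h : j = i + (b - a)
    · rw [if_pos h, if_pos h]
      have h1 := h1_scalar l r m a.val i.val
      have h2 := h2_scalar l r m a.val i.val
      linear_combination (l:ℂ)⁻¹ * h1 - (l:ℂ)⁻¹ * h2
    · rw [if_neg h, if_neg h, mul_zero]
  rw [Finset.sum_congr rfl (fun r _ => hterm r)]
  by_cases h : j = i + (b - a)
  · simp only [if_pos h]
    rw [Finset.sum_sub_distrib, ← Finset.mul_sum, ← Finset.mul_sum, char_sum, char_sum]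
    have hc1 : (((i.val:ℤ) - (a.val:ℤ) : ℤ) : ZMod l) = 0 ↔ i = a := by
      push_cast
      rw [ZMod.natCast_val, ZMod.natCast_val, ZMod.cast_id, ZMod.cast_id, sub_eq_zero]
    have hc2 : (((1 - m) - ((a.val:ℤ) + (i.val:ℤ) + 2) : ℤ) : ZMod l) = 0 ↔ i = -(b+1) := by
      push_cast
      rw [ZMod.natCast_val, ZMod.natCast_val, ZMod.cast_id, ZMod.cast_id, hmz]
      constructor
      · intro hz
        linear_combination -hz
      · intro hz
        rw [hz]
        ring
    have hlne : (l:ℂ) ≠ 0 := lC_ne l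
    rw [Bm, Matrix.of_apply]
    by_cases hia : i = a
    · have hjb : j = b := by rw [h, hia]; ring
      rw [if_pos ⟨hia, hjb⟩, if_pos (hc1.2 hia)]
      by_cases hib : i = -(b+1)
      · have hja : j = -(a+1) := by rw [h, hib]; ring
        rw [if_pos ⟨hib, hja⟩, if_pos (hc2.2 hib)]
        field_simp
      · rw [if_neg (fun hc => hib hc.1), if_neg (fun hc => hib (hc2.1 hc))]
        field_simp
        ring
    · rw [if_neg (fun hc => hia hc.1), if_neg (fun hc => hia (hc1.1 hc))]
      by_cases hib : i = -(b+1)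
      · have hja : j = -(a+1) := by rw [h, hib]; ring
        rw [if_pos ⟨hib, hja⟩, if_pos (hc2.2 hib)]
        field_simp
        ring
      · rw [if_neg (fun hc => hib hc.1), if_neg (fun hc => hib (hc2.1 hc))]
        simp
  · simp only [if_neg h, Finset.sum_const_zero]
    rw [Bm, Matrix.of_apply]
    have hn1 : ¬(i = a ∧ j = b) := by
      rintro ⟨rfl, rfl⟩
      exact h (by ring)
    have hn2 : ¬(i = -(b+1) ∧ j = -(a+1)) := by
      rintro ⟨rfl, rfl⟩
      exact h (by ring)
    rw [if_neg hn1, if_neg hn2, sub_zero]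

lemma Bm_mem_span (a b : ZMod l) :
    Bm l a b ∈ Submodule.span ℂ {X : MatL l | ∃ r m : ℤ, X = dmat l r m} := by
  rw [Bm_eq_sum]
  apply Submodule.sum_mem
  intro r _
  exact Submodule.smul_mem _ _ (Submodule.subset_span ⟨r, _, rfl⟩)

lemma span_eq_ker :
    Submodule.span ℂ {X : MatL l | ∃ r m : ℤ, X = dmat l r m}
      = LinearMap.ker (skewPair (Tmat l)) := by
  apply le_antisymm
  · rw [Submodule.span_le]
    rintro X ⟨r, m, rfl⟩
    exact dmat_mem_ker l r m
  · intro X hX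
    rw [mem_ker_skewPair_iff] at hX
    have hXsym : ∀ i j : ZMod l, X (-(j+1)) (-(i+1)) = -X i j := by
      intro i j
      have := hX j (-(i+1))
      have hii : -(-(i+1) + 1) = i := by ring
      rw [hii] at this
      linear_combination this
    have hrep : X = ∑ p : ZMod l × ZMod l, (2⁻¹ * X p.1 p.2) • Bm l p.1 p.2 := by
      ext i j
      rw [Matrix.sum_apply]
      have hterm : ∀ p : ZMod l × ZMod l,
          ((2⁻¹ * X p.1 p.2) • Bm l p.1 p.2) i j
          = (if p = (i, j) then 2⁻¹ * X p.1 p.2 else 0)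
            - (if p = (-(j+1), -(i+1)) then 2⁻¹ * X p.1 p.2 else 0) := by
        intro p
        rw [Matrix.smul_apply, Bm, Matrix.of_apply, smul_eq_mul, mul_sub]
        congr 1
        · by_cases hp : p = (i, j)
          · rw [if_pos hp, if_pos ⟨by rw [hp], by rw [hp]⟩, mul_one]
          · rw [if_neg hp, if_neg (fun hc => hp (Prod.ext hc.1.symm hc.2.symm)), mul_zero]
        · by_cases hp : p = (-(j+1), -(i+1))
          · have h1 : i = -(p.2+1) := by rw [hp]; ring
            have h2 : j = -(p.1+1) := by rw [hp]; ring
            rw [if_pos hp, if_pos ⟨h1, h2⟩, mul_one]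
          · rw [if_neg hp, if_neg, mul_zero]
            rintro ⟨h1, h2⟩
            apply hp
            have : p.1 = -(j+1) := by rw [h2]; ring
            have : p.2 = -(i+1) := by rw [h1]; ring
            exact Prod.ext ‹p.1 = -(j+1)› this
      rw [Finset.sum_congr rfl (fun p _ => hterm p), Finset.sum_sub_distrib,
        Finset.sum_ite_eq' Finset.univ ((i,j) : ZMod l × ZMod l) (fun p => 2⁻¹ * X p.1 p.2),
        Finset.sum_ite_eq' Finset.univ ((-(j+1), -(i+1)) : ZMod l × ZMod l)
          (fun p => 2⁻¹ * X p.1 p.2)]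
      simp only [Finset.mem_univ, if_true]
      rw [hXsym i j]
      ring
    rw [hrep]
    apply Submodule.sum_mem
    intro p _
    exact Submodule.smul_mem _ _ (Bm_mem_span l p.1 p.2)

-- Part 2: Lie closure
lemma lie_closed (X Y : MatL l) (hX : X ∈ LinearMap.ker (skewPair (Tmat l)))
    (hY : Y ∈ LinearMap.ker (skewPair (Tmat l))) :
    X * Y - Y * X ∈ LinearMap.ker (skewPair (Tmat l)) := by
  rw [LinearMap.mem_ker] at *
  have hX' : Xᵀ * Tmat l + Tmat l * X = 0 := hX
  have hY' : Yᵀ * Tmat l + Tmat l * Y = 0 := hY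
  have hX'' : Xᵀ * Tmat l = -(Tmat l * X) := eq_neg_of_add_eq_zero_left hX'
  have hY'' : Yᵀ * Tmat l = -(Tmat l * Y) := eq_neg_of_add_eq_zero_left hY'
  show (X * Y - Y * X)ᵀ * Tmat l + Tmat l * (X * Y - Y * X) = 0
  calc (X * Y - Y * X)ᵀ * Tmat l + Tmat l * (X * Y - Y * X)
      = Yᵀ * (Xᵀ * Tmat l) - Xᵀ * (Yᵀ * Tmat l) + Tmat l * (X * Y - Y * X) := by
        rw [Matrix.transpose_sub, Matrix.transpose_mul, Matrix.transpose_mul]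
        noncomm_ring
    _ = Yᵀ * -(Tmat l * X) - Xᵀ * -(Tmat l * Y) + Tmat l * (X * Y - Y * X) := by
        rw [hX'', hY'']
    _ = -((Yᵀ * Tmat l) * X) + ((Xᵀ * Tmat l) * Y) + Tmat l * (X * Y - Y * X) := by
        noncomm_ring
    _ = -((-(Tmat l * Y)) * X) + ((-(Tmat l * X)) * Y) + Tmat l * (X * Y - Y * X) := by
        rw [hX'', hY'']
    _ = 0 := by noncomm_ring

-- Part 3/4 : conjugation
lemma Tmat_transpose : (Tmat l)ᵀ = Tmat l := by
  ext i j
  rw [Matrix.transpose_apply, Tmat, Matrix.of_apply, Matrix.of_apply]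
  exact if_congr (by omega) rfl rfl

lemma Tmat_sq : Tmat l * Tmat l = 1 := by
  ext i j
  rw [Matrix.mul_apply, Finset.sum_congr rfl (fun k _ => by
    rw [Tmat_apply l i k, ite_mul, one_mul, zero_mul]),
    Finset.sum_ite_eq' Finset.univ (-(i+1) : ZMod l) (fun k => Tmat l k j)]
  simp only [Finset.mem_univ, if_true]
  rw [Tmat_apply, Matrix.one_apply]
  have : (j = -(-(i+1)+1)) ↔ (i = j) := by
    constructor
    · intro h; rw [h]; ring
    · intro h; rw [← h]; ring
  exact if_congr this rfl rfl

noncomputable def Umat (l : ℕ) : MatL l := (((1:ℂ) - Complex.I)/2) • (1 + Complex.I • Tmat l)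
noncomputable def Vmat (l : ℕ) : MatL l := (((1:ℂ) + Complex.I)/2) • (1 - Complex.I • Tmat l)

lemma Umat_transpose : (Umat l)ᵀ = Umat l := by
  rw [Umat, Matrix.transpose_smul, Matrix.transpose_add, Matrix.transpose_smul,
    Matrix.transpose_one, Tmat_transpose]

lemma Vmat_transpose : (Vmat l)ᵀ = Vmat l := by
  rw [Vmat, Matrix.transpose_smul, Matrix.transpose_sub, Matrix.transpose_smul,
    Matrix.transpose_one, Tmat_transpose]

lemma mul_one_add_sub : (1 + Complex.I • Tmat l) * (1 - Complex.I • Tmat l) = (2:ℂ) • 1 := by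
  simp only [Matrix.mul_sub, Matrix.add_mul, Matrix.smul_mul, Matrix.mul_smul, smul_smul,
    Tmat_sq, Matrix.one_mul, Matrix.mul_one, Complex.I_mul_I]
  match_scalars <;> (try ring1) <;> linear_combination -Complex.I_sq

lemma mul_one_sub_add : (1 - Complex.I • Tmat l) * (1 + Complex.I • Tmat l) = (2:ℂ) • 1 := by
  simp only [Matrix.mul_add, Matrix.sub_mul, Matrix.smul_mul, Matrix.mul_smul, smul_smul,
    Tmat_sq, Matrix.one_mul, Matrix.mul_one, Complex.I_mul_I]
  match_scalars <;> (try ring1) <;> linear_combination -Complex.I_sq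

lemma mul_one_add_add : (1 + Complex.I • Tmat l) * (1 + Complex.I • Tmat l)
    = (2*Complex.I) • Tmat l := by
  simp only [Matrix.mul_add, Matrix.add_mul, Matrix.smul_mul, Matrix.mul_smul, smul_smul,
    Tmat_sq, Matrix.one_mul, Matrix.mul_one, Complex.I_mul_I]
  match_scalars <;> (try ring1) <;> linear_combination Complex.I_sq

lemma mul_one_sub_sub : (1 - Complex.I • Tmat l) * (1 - Complex.I • Tmat l)
    = (-(2*Complex.I)) • Tmat l := by
  simp only [Matrix.mul_sub, Matrix.sub_mul, Matrix.smul_mul, Matrix.mul_smul, smul_smul,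
    Tmat_sq, Matrix.one_mul, Matrix.mul_one, Complex.I_mul_I]
  match_scalars <;> (try ring1) <;> linear_combination Complex.I_sq

lemma UV_eq_one : Umat l * Vmat l = 1 := by
  rw [Umat, Vmat, Matrix.smul_mul, Matrix.mul_smul, smul_smul, mul_one_add_sub, smul_smul]
  rw [show ((1:ℂ) - Complex.I)/2 * ((1 + Complex.I)/2) * 2 = 1 by
    linear_combination (-1/2 : ℂ) * Complex.I_sq]
  exact one_smul _ _

lemma VU_eq_one : Vmat l * Umat l = 1 := by
  rw [Umat, Vmat, Matrix.smul_mul, Matrix.mul_smul, smul_smul, mul_one_sub_add, smul_smul]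
  rw [show ((1:ℂ) + Complex.I)/2 * ((1 - Complex.I)/2) * 2 = 1 by
    linear_combination (-1/2 : ℂ) * Complex.I_sq]
  exact one_smul _ _

lemma UU_eq_T : Umat l * Umat l = Tmat l := by
  rw [Umat, Matrix.smul_mul, Matrix.mul_smul, smul_smul, mul_one_add_add, smul_smul]
  rw [show ((1:ℂ) - Complex.I)/2 * (((1:ℂ) - Complex.I)/2) * (2*Complex.I) = 1 by
    linear_combination (Complex.I/2 - 1) * Complex.I_sq]
  exact one_smul _ _

lemma VV_eq_T : Vmat l * Vmat l = Tmat l := by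
  rw [Vmat, Matrix.smul_mul, Matrix.mul_smul, smul_smul, mul_one_sub_sub, smul_smul]
  rw [show ((1:ℂ) + Complex.I)/2 * (((1:ℂ) + Complex.I)/2) * (-(2*Complex.I)) = 1 by
    linear_combination (-Complex.I/2 - 1) * Complex.I_sq]
  exact one_smul _ _

lemma TV_eq_U : Tmat l * Vmat l = Umat l := by
  rw [← UU_eq_T, mul_assoc, UV_eq_one, mul_one]

lemma VT_eq_U : Vmat l * Tmat l = Umat l := by
  rw [← UU_eq_T, ← mul_assoc, VU_eq_one, one_mul]

lemma mem_ker_transAdd_iff {n : Type*} [Fintype n] [DecidableEq n] (Y : Matrix n n ℂ) :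
    Y ∈ LinearMap.ker (transAdd (n := n)) ↔ Yᵀ + Y = 0 := Iff.rfl

lemma mem_ker_skewPair_iff' (X : MatL l) :
    X ∈ LinearMap.ker (skewPair (Tmat l)) ↔ Xᵀ * Tmat l + Tmat l * X = 0 := Iff.rfl

lemma conj_mem (X : MatL l) (hX : X ∈ LinearMap.ker (skewPair (Tmat l))) :
    Umat l * X * Vmat l ∈ LinearMap.ker (transAdd (n := ZMod l)) := by
  rw [mem_ker_skewPair_iff'] at hX
  rw [mem_ker_transAdd_iff]
  have key : (Umat l * X * Vmat l)ᵀ + Umat l * X * Vmat l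
      = Vmat l * (Xᵀ * Tmat l + Tmat l * X) * Vmat l := by
    rw [Matrix.transpose_mul, Matrix.transpose_mul, Umat_transpose, Vmat_transpose]
    have e1 : Vmat l * (Xᵀ * Tmat l + Tmat l * X) * Vmat l
        = Vmat l * Xᵀ * (Tmat l * Vmat l) + (Vmat l * Tmat l) * (X * Vmat l) := by
      noncomm_ring
    rw [e1, TV_eq_U, VT_eq_U]
    noncomm_ring
  rw [key, hX, Matrix.mul_zero, Matrix.zero_mul]

lemma conj_mem' (Y : MatL l) (hY : Y ∈ LinearMap.ker (transAdd (n := ZMod l))) :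
    Vmat l * Y * Umat l ∈ LinearMap.ker (skewPair (Tmat l)) := by
  rw [mem_ker_transAdd_iff] at hY
  rw [mem_ker_skewPair_iff']
  have key : (Vmat l * Y * Umat l)ᵀ * Tmat l + Tmat l * (Vmat l * Y * Umat l)
      = Umat l * (Yᵀ + Y) * Umat l := by
    rw [Matrix.transpose_mul, Matrix.transpose_mul, Umat_transpose, Vmat_transpose]
    have e1 : Umat l * (Yᵀ + Y) * Umat l
        = Umat l * Yᵀ * Umat l + Umat l * Y * Umat l := by noncomm_ring
    rw [e1]
    congr 1
    · -- Uᵀ Yᵀ Vᵀ T = U Yᵀ (V T) = U Yᵀ U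
      rw [mul_assoc, mul_assoc, VT_eq_U, ← mul_assoc]
    · -- T (V Y U) = (T V) Y U = U Y U
      rw [← mul_assoc, ← mul_assoc, TV_eq_U]
  rw [key, hY, Matrix.mul_zero, Matrix.zero_mul]

lemma conjInvA (X : MatL l) : Vmat l * (Umat l * X * Vmat l) * Umat l = X := by
  calc Vmat l * (Umat l * X * Vmat l) * Umat l
      = (Vmat l * Umat l) * X * (Vmat l * Umat l) := by noncomm_ring
    _ = X := by rw [VU_eq_one, one_mul, mul_one]

lemma conjInvB (Y : MatL l) : Umat l * (Vmat l * Y * Umat l) * Vmat l = Y := by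
  calc Umat l * (Vmat l * Y * Umat l) * Vmat l
      = (Umat l * Vmat l) * Y * (Umat l * Vmat l) := by noncomm_ring
    _ = Y := by rw [UV_eq_one, one_mul, mul_one]

noncomputable def conjEquiv :
    LinearMap.ker (skewPair (Tmat l)) ≃ₗ[ℂ] LinearMap.ker (transAdd (n := ZMod l)) where
  toFun X := ⟨Umat l * (X : MatL l) * Vmat l, conj_mem l X X.2⟩
  invFun Y := ⟨Vmat l * (Y : MatL l) * Umat l, conj_mem' l Y Y.2⟩
  map_add' X Y := by
    apply Subtype.ext
    push_cast
    noncomm_ring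
  map_smul' c X := by
    apply Subtype.ext
    push_cast
    simp [Matrix.smul_mul, Matrix.mul_smul]
  left_inv X := Subtype.ext (conjInvA l X)
  right_inv Y := Subtype.ext (conjInvB l Y)

lemma conjEquiv_bracket (X Y : LinearMap.ker (skewPair (Tmat l))) :
    (conjEquiv l ⟨(X : MatL l) * Y - (Y : MatL l) * X,
        lie_closed l X Y X.2 Y.2⟩ : MatL l)
      = (conjEquiv l X : MatL l) * (conjEquiv l Y : MatL l)
        - (conjEquiv l Y : MatL l) * (conjEquiv l X : MatL l) := by
  show Umat l * ((X : MatL l) * Y - (Y : MatL l) * X) * Vmat l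
      = Umat l * (X : MatL l) * Vmat l * (Umat l * (Y : MatL l) * Vmat l)
        - Umat l * (Y : MatL l) * Vmat l * (Umat l * (X : MatL l) * Vmat l)
  have h1 : Umat l * (X : MatL l) * Vmat l * (Umat l * (Y : MatL l) * Vmat l)
      = Umat l * ((X : MatL l) * ((Vmat l * Umat l) * ((Y : MatL l) * Vmat l))) := by
    noncomm_ring
  have h2 : Umat l * (Y : MatL l) * Vmat l * (Umat l * (X : MatL l) * Vmat l)
      = Umat l * ((Y : MatL l) * ((Vmat l * Umat l) * ((X : MatL l) * Vmat l))) := by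
    noncomm_ring
  rw [h1, h2, VU_eq_one, one_mul, one_mul]
  noncomm_ring

abbrev IdxL (l : ℕ) := {p : ZMod l × ZMod l // p.1.val < p.2.val}

noncomputable def skewToFun : LinearMap.ker (transAdd (n := ZMod l)) →ₗ[ℂ] (IdxL l → ℂ) where
  toFun X := fun p => (X : MatL l) p.1.1 p.1.2
  map_add' X Y := by funext p; simp
  map_smul' c X := by funext p; simp

noncomputable def funToSkewMat (f : IdxL l → ℂ) : MatL l :=
  Matrix.of fun i j =>
    if h : i.val < j.val then f ⟨(i, j), h⟩
    else if h' : j.val < i.val then -f ⟨(j, i), h'⟩ else 0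

lemma funToSkewMat_mem (f : IdxL l → ℂ) :
    funToSkewMat l f ∈ LinearMap.ker (transAdd (n := ZMod l)) := by
  rw [mem_ker_transAdd_iff]
  ext i j
  rw [Matrix.add_apply, Matrix.transpose_apply, Matrix.zero_apply, funToSkewMat,
    Matrix.of_apply, Matrix.of_apply]
  rcases lt_trichotomy i.val j.val with h | h | h
  · rw [dif_neg (by omega), dif_pos h, dif_pos h]
    ring
  · have hij : i = j := ZMod.val_injective l h
    subst hij
    rw [dif_neg (by omega), dif_neg (by omega)]
    ring
  · rw [dif_pos h, dif_neg (by omega), dif_pos h]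
    ring
lemma funToSkew_add (f g : IdxL l → ℂ) :
    funToSkewMat l (f + g) = funToSkewMat l f + funToSkewMat l g := by
  ext i j
  simp only [funToSkewMat, Matrix.of_apply, Matrix.add_apply, Pi.add_apply]
  split_ifs <;> ring

lemma funToSkew_smul (c : ℂ) (f : IdxL l → ℂ) :
    funToSkewMat l (c • f) = c • funToSkewMat l f := by
  ext i j
  simp only [funToSkewMat, Matrix.of_apply, Matrix.smul_apply, Pi.smul_apply, smul_eq_mul]
  split_ifs <;> ring

noncomputable def skewEquivFun :
    LinearMap.ker (transAdd (n := ZMod l)) ≃ₗ[ℂ] (IdxL l → ℂ) where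
  toFun := skewToFun l
  map_add' := (skewToFun l).map_add
  map_smul' := (skewToFun l).map_smul
  invFun f := ⟨funToSkewMat l f, funToSkewMat_mem l f⟩
  left_inv X := by
    apply Subtype.ext
    ext i j
    have hskew : (X : MatL l)ᵀ + (X : MatL l) = 0 := X.2
    have hsk : ∀ a b : ZMod l, (X : MatL l) b a + (X : MatL l) a b = 0 := by
      intro a b
      have := congrFun (congrFun hskew a) b
      simpa using this
    show funToSkewMat l (fun p => (X : MatL l) p.1.1 p.1.2) i j = (X : MatL l) i j
    rw [funToSkewMat, Matrix.of_apply]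
    rcases lt_trichotomy i.val j.val with h | h | h
    · rw [dif_pos h]
    · have hij : i = j := ZMod.val_injective l h
      subst hij
      rw [dif_neg (by omega), dif_neg (by omega)]
      have := hsk i i
      linear_combination -this/2
    · rw [dif_neg (by omega), dif_pos h]
      have := hsk i j
      linear_combination -this
  right_inv f := by
    funext p
    show funToSkewMat l f p.1.1 p.1.2 = f p
    rw [funToSkewMat, Matrix.of_apply, dif_pos p.2]

noncomputable def idxEquiv : IdxL l ≃ (Σ j : Fin l, Fin j.val) where
  toFun p := ⟨⟨p.1.2.val, ZMod.val_lt _⟩, ⟨p.1.1.val, p.2⟩⟩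
  invFun s := ⟨(((s.2 : ℕ) : ZMod l), ((s.1 : ℕ) : ZMod l)), by
    have h1 : (s.2 : ℕ) < l := lt_trans s.2.isLt s.1.isLt
    have h2 : (s.1 : ℕ) < l := s.1.isLt
    simp only [ZMod.val_cast_of_lt h1, ZMod.val_cast_of_lt h2]
    exact s.2.isLt⟩
  left_inv p := by
    apply Subtype.ext
    apply Prod.ext
    · show ((p.1.1.val : ℕ) : ZMod l) = p.1.1
      rw [ZMod.natCast_val, ZMod.cast_id]
    · show ((p.1.2.val : ℕ) : ZMod l) = p.1.2
      rw [ZMod.natCast_val, ZMod.cast_id]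
  right_inv s := by
    have h1 : (s.2 : ℕ) < l := lt_trans s.2.isLt s.1.isLt
    have h2 : (s.1 : ℕ) < l := s.1.isLt
    apply Sigma.ext
    · apply Fin.ext
      show (((s.1 : ℕ) : ZMod l)).val = (s.1 : ℕ)
      exact ZMod.val_cast_of_lt h2
    · rw [Fin.heq_ext_iff]
      · show (((s.2 : ℕ) : ZMod l)).val = (s.2 : ℕ)
        exact ZMod.val_cast_of_lt h1
      · show (((s.1 : ℕ) : ZMod l)).val = (s.1 : ℕ)
        exact ZMod.val_cast_of_lt h2

lemma card_IdxL : Fintype.card (IdxL l) = l * (l - 1) / 2 := by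
  rw [Fintype.card_congr (idxEquiv l), Fintype.card_sigma]
  have : ∀ j : Fin l, Fintype.card (Fin j.val) = j.val := fun j => Fintype.card_fin _
  rw [Finset.sum_congr rfl (fun j _ => this j)]
  rw [Fin.sum_univ_eq_sum_range (fun i => i) l, Finset.sum_range_id]

lemma finrank_ker_transAdd :
    Module.finrank ℂ (LinearMap.ker (transAdd (n := ZMod l))) = l * (l - 1) / 2 := by
  rw [LinearEquiv.finrank_eq (skewEquivFun l), Module.finrank_pi, card_IdxL]

lemma finrank_ker_skewPair :
    Module.finrank ℂ (LinearMap.ker (skewPair (Tmat l))) = l * (l - 1) / 2 := by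
  rw [LinearEquiv.finrank_eq (conjEquiv l), finrank_ker_transAdd]

end Aux

theorem stmt19 (l : ℕ) [NeZero l] (hl2 : 2 ≤ l) :
    -- the span of the `d_{r,m}` is exactly `{X : Xᵀ T = −T X}`
    Submodule.span ℂ {X : MatL l | ∃ r m : ℤ, X = dmat l r m} =
      LinearMap.ker (skewPair (Tmat l)) ∧
    -- this space is a Lie subalgebra of `gl_l(ℂ)` ...
    (∀ X Y : MatL l, X ∈ LinearMap.ker (skewPair (Tmat l)) →
      Y ∈ LinearMap.ker (skewPair (Tmat l)) →
      X * Y - Y * X ∈ LinearMap.ker (skewPair (Tmat l))) ∧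
    -- ... of dimension l(l−1)/2 ...
    Module.finrank ℂ (LinearMap.ker (skewPair (Tmat l))) = l * (l - 1) / 2 ∧
    -- ... isomorphic as a complex Lie algebra to `so(l,ℂ) = {X : Xᵀ = −X}`
    ∃ e : LinearMap.ker (skewPair (Tmat l)) ≃ₗ[ℂ] LinearMap.ker (transAdd (n := ZMod l)),
      ∀ X Y : LinearMap.ker (skewPair (Tmat l)),
        ∃ Z : LinearMap.ker (skewPair (Tmat l)),
          (Z : MatL l) = (X : MatL l) * Y - (Y : MatL l) * X ∧
          (e Z : MatL l) = (e X : MatL l) * (e Y) - (e Y : MatL l) * (e X) := by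
  refine ⟨span_eq_ker l, lie_closed l, finrank_ker_skewPair l, conjEquiv l, fun X Y => ?_⟩
  exact ⟨⟨(X : MatL l) * Y - (Y : MatL l) * X, lie_closed l X Y X.2 Y.2⟩, rfl,
    conjEquiv_bracket l X Y⟩
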